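/- Let $\{a_i\}_{i=1}^n$ and $\{b_i\}_{i=1}^n$ be sequences of positive real numbers such that $a_1 = b_1$ and for each $i$ with $1 \le i < n$, $a_{i+1} \le (a_i^{-1} + b_{i+1}^{-1})^{-1}$ (i.e., $a_{i+1}$ is at most the harmonic sum of $a_i$ and $b_{i+1}$). Then $\left(\sum_{i=1}^n a_i\right)^2 \le \frac{4}{3}\, b_1 \sum_{i=1}^n b_i$. -/

import Mathlib

theorem stmt0 (n : ℕ) (a b : ℕ → ℝ)
    (ha : ∀ i ∈ Finset.Icc 1 n, 0 < a i)
    (hb : ∀ i ∈ Finset.Icc 1 n, 0 < b i)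
    (hab : a 1 = b 1)
    (hrec : ∀ i, 1 ≤ i → i < n → a (i + 1) ≤ ((a i)⁻¹ + (b (i + 1))⁻¹)⁻¹) :
    (∑ i ∈ Finset.Icc 1 n, a i) ^ 2 ≤ 4 / 3 * b 1 * ∑ i ∈ Finset.Icc 1 n, b i := by
  rcases Nat.eq_zero_or_pos n with hn | hn
  · subst hn; simp
  have h1n : (1 : ℕ) ∈ Finset.Icc 1 n := by simp [Finset.mem_Icc]; omega
  have ha1 : 0 < a 1 := ha 1 h1n
  set s : Finset ℕ := Finset.Icc 2 n with hs
  -- per-element facts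
  have hkey : ∀ k ∈ s, 0 < a (k-1) ∧ 0 < a k ∧ 0 < b k ∧
      a k * (a (k-1) + b k) ≤ a (k-1) * b k := by
    intro k hk
    have hk2 : 2 ≤ k ∧ k ≤ n := by simpa [hs, Finset.mem_Icc] using hk
    have hp : 0 < a (k-1) := ha _ (by simp [Finset.mem_Icc]; omega)
    have hx : 0 < a k := ha _ (by simp [Finset.mem_Icc]; omega)
    have hq : 0 < b k := hb _ (by simp [Finset.mem_Icc]; omega)
    have hr := hrec (k-1) (by omega) (by omega)
    rw [show k - 1 + 1 = k by omega] at hr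
    have hinv : ((a (k-1))⁻¹ + (b k)⁻¹)⁻¹ = a (k-1) * b k / (a (k-1) + b k) := by
      field_simp
      ring
    rw [hinv] at hr
    have := (le_div_iff₀ (by positivity)).mp hr
    exact ⟨hp, hx, hq, by linarith⟩
  have hdec : ∀ k ∈ s, a k < a (k-1) := by
    intro k hk
    obtain ⟨hp, hx, hq, hm⟩ := hkey k hk
    nlinarith
  -- sums
  set R : ℝ := ∑ k ∈ s, a k with hR
  set W : ℝ := ∑ k ∈ s, a (k-1) * a k / (a (k-1) - a k) with hW
  set Q : ℝ := ∑ k ∈ s, (a k)^2 / a (k-1) with hQ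
  set U : ℝ := ∑ k ∈ s, b k with hU
  set S : ℝ := ∑ i ∈ Finset.Icc 1 n, a i with hS
  have hsplit : Finset.Icc 1 n = insert 1 s := by
    ext x; simp [hs, Finset.mem_Icc]; omega
  have h1s : (1:ℕ) ∉ s := by simp [hs]
  have hSa : S = a 1 + R := by rw [hS, hsplit, Finset.sum_insert h1s]
  have hTb : (∑ i ∈ Finset.Icc 1 n, b i) = b 1 + U := by
    rw [hsplit, Finset.sum_insert h1s]
  have hWpos : 0 ≤ W := Finset.sum_nonneg (fun k hk => by
    obtain ⟨hp, hx, hq, hm⟩ := hkey k hk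
    have hd : 0 < a (k-1) - a k := by linarith [hdec k hk]
    positivity)
  have hRpos : 0 ≤ R := Finset.sum_nonneg (fun k hk => (hkey k hk).2.1.le)
  have hQpos : 0 ≤ Q := Finset.sum_nonneg (fun k hk => by
    obtain ⟨hp, hx, _, _⟩ := hkey k hk; positivity)
  have hWU : W ≤ U := Finset.sum_le_sum (fun k hk => by
    obtain ⟨hp, hx, hq, hm⟩ := hkey k hk
    have hd := hdec k hk
    rw [div_le_iff₀ (by linarith)]
    nlinarith)
  -- Engel 1 : R^2 ≤ W * (R - Q)
  have hE1 : R^2 ≤ W * (R - Q) := by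
    rcases Finset.eq_empty_or_nonempty s with he | hne
    · simp [hR, hW, hQ, he]
    have hgpos : ∀ k ∈ s, 0 < a (k-1) * a k / (a (k-1) - a k) := fun k hk => by
      obtain ⟨hp, hx, _, _⟩ := hkey k hk
      have hd : 0 < a (k-1) - a k := by linarith [hdec k hk]
      positivity
    have := Finset.sq_sum_div_le_sum_sq_div s a hgpos
    have hWpos' : 0 < W := Finset.sum_pos hgpos hne
    have hterm : ∀ k ∈ s, (a k)^2 / (a (k-1) * a k / (a (k-1) - a k))
        = a k - (a k)^2 / a (k-1) := by
      intro k hk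
      obtain ⟨hp, hx, _, _⟩ := hkey k hk
      have hd := hdec k hk
      field_simp
    rw [Finset.sum_congr rfl hterm, Finset.sum_sub_distrib] at this
    calc R^2 = (R^2 / W) * W := by field_simp
    _ ≤ (R - Q) * W := by
        apply mul_le_mul_of_nonneg_right _ hWpos'.le
        exact this
    _ = W * (R - Q) := by ring
  -- Engel 2 : R^2 ≤ S * Q
  have hE2 : R^2 ≤ S * Q := by
    rcases Finset.eq_empty_or_nonempty s with he | hne
    · simp [hR, hQ, he]
    have hgpos : ∀ k ∈ s, 0 < a (k-1) := fun k hk => (hkey k hk).1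
    have h := Finset.sq_sum_div_le_sum_sq_div s a hgpos
    have hsum : ∑ k ∈ s, a (k-1) ≤ S := by
      rw [hS]
      have : ∑ k ∈ s, a (k-1) = ∑ j ∈ Finset.Icc 1 (n-1), a j := by
        apply Finset.sum_nbij' (fun k => k - 1) (fun j => j + 1) <;>
          simp [hs, Finset.mem_Icc] <;> omega
      rw [this]
      apply Finset.sum_le_sum_of_subset_of_nonneg
      · apply Finset.Icc_subset_Icc_right; omega
      · intro i hi _; exact (ha i hi).le
    have hspos : 0 < ∑ k ∈ s, a (k-1) := Finset.sum_pos hgpos hne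
    have := (div_le_iff₀ hspos).mp h
    calc R^2 ≤ Q * (∑ k ∈ s, a (k-1)) := this
    _ ≤ Q * S := by apply mul_le_mul_of_nonneg_left _ hQpos; exact hsum
    _ = S * Q := by ring
  -- combine: R * S ≤ W * a 1
  have hRS : R * S ≤ W * a 1 := by
    rcases eq_or_lt_of_le hRpos with h0 | h0
    · rw [← h0]; ring_nf; positivity
    have hSpos : 0 < S := by rw [hSa]; linarith
    -- R^2 * S ≤ W*(R-Q)*S = W*R*S - W*Q*S ≤ W*R*S - W*R^2
    have h1 : R^2 * S ≤ W * (R - Q) * S := by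
      apply mul_le_mul_of_nonneg_right hE1 hSpos.le
    have h2 : W * R^2 ≤ W * (Q * S) := mul_le_mul_of_nonneg_left (by linarith) hWpos
    have h3 : R^2 * S ≤ W * R * (S - R) := by nlinarith
    have h4 : S - R = a 1 := by rw [hSa]; ring
    rw [h4] at h3
    nlinarith
  -- final
  rw [hTb, ← hab]
  have hUW : a 1 * W ≤ a 1 * U := mul_le_mul_of_nonneg_left hWU ha1.le
  nlinarith [sq_nonneg (a 1 - R), hSa, hRS]
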